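/- arXiv:2404.04549 — 4 statements merged into one kernel-verified Lean document; each statement's English description precedes it below -/
import Mathlib

section
/- Let Φ be a spiking neural network on a network graph G=(V,E) in which every edge (u,v) carries a synaptic weight w_{(u,v)} ≥ 0 and a synaptic delay d_{(u,v)} ≥ 0, every response function equals the ReLU ρ(t)=max{t,0}, and for every node v ∈ V∖V_in there exists an edge (u,v) ∈ E with w_{(u,v)} > 0. Then for any assignment of input spike times t_u ∈ ℝ for u ∈ V_in, the potentials P_v(t) = Σ_{(u,v)∈E} w_{(u,v)} ρ(t − t_u − d_{(u,v)}) and the spike times t_v = min{t ∈ ℝ : P_v(t) = 1} are well-defined for all v ∈ V∖V_in; in particular the set {t ∈ ℝ : P_v(t) = 1} is nonempty and its minimum exists and is unique. -/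
open scoped BigOperators

noncomputable section

/-- The ReLU function. -/
def relu (t : ℝ) : ℝ := max t 0

/-- A network graph: a finite directed acyclic graph without isolated nodes. -/
structure NetworkGraph (V : Type) [Fintype V] [DecidableEq V] where
  E : Finset (V × V)
  acyclic : WellFounded (fun u v : V => (u, v) ∈ E)
  noIsolated : ∀ v : V, (∃ u, (u, v) ∈ E) ∨ (∃ u, (v, u) ∈ E)

variable {V : Type} [Fintype V] [DecidableEq V]

/-- Input nodes: nodes with no incoming edges. -/
def NetworkGraph.Vin (G : NetworkGraph V) : Set V := {v | ∀ u, (u, v) ∉ G.E}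

/-- Output nodes: nodes with no outgoing edges. -/
def NetworkGraph.Vout (G : NetworkGraph V) : Set V := {v | ∀ u, (v, u) ∉ G.E}

/-- There exists a directed path with `n` edges in `G`. -/
def NetworkGraph.HasPathLen (G : NetworkGraph V) (n : ℕ) : Prop :=
  ∃ p : Fin (n + 1) → V, ∀ i : Fin n, (p i.castSucc, p i.succ) ∈ G.E

/-- The graph depth (length of the longest directed path) of `G` equals `L`. -/
def NetworkGraph.DepthEq (G : NetworkGraph V) (L : ℕ) : Prop :=
  G.HasPathLen L ∧ ∀ n : ℕ, G.HasPathLen n → n ≤ L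

/-- The potential of node `v` at time `s`, given presynaptic spike times `t`,
weights `w` and delays `d`. -/
def potential (G : NetworkGraph V) (w d : V × V → ℝ) (t : V → ℝ) (v : V) (s : ℝ) : ℝ :=
  ∑ u ∈ Finset.univ.filter (fun u => (u, v) ∈ G.E), w (u, v) * relu (s - t u - d (u, v))

/-- `t` is a consistent assignment of spike times extending the input spike times `tin`:
on input nodes it agrees with `tin`, and at every non-input node `v` the spike time `t v`
is the minimum (which exists) of the set of times at which the potential reaches `1`. -/
def IsSpikeMap (G : NetworkGraph V) (w d : V × V → ℝ) (tin : V → ℝ) (t : V → ℝ) : Prop :=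
  (∀ v ∈ G.Vin, t v = tin v) ∧
  ∀ v : V, v ∉ G.Vin → IsLeast {s : ℝ | potential G w d t v s = 1} (t v)

open Classical in
/-- The spike-time assignment determined by the input spike times `tin` (via choice). -/
def spikeMap (G : NetworkGraph V) (w d : V × V → ℝ) (tin : V → ℝ) : V → ℝ :=
  if h : ∃ t, IsSpikeMap G w d tin t then h.choose else fun _ => 0

/-- Realization of a (positive) SNN, given enumerations of input and output nodes. -/
def snnReal (G : NetworkGraph V) (w d : V × V → ℝ) {din dout : ℕ}
    (ein : Fin din → V) (eout : Fin dout → V) (x : Fin din → ℝ) : Fin dout → ℝ :=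
  fun j => spikeMap G w d (Function.extend ein x (fun _ => 0)) (eout j)

/-- Frobenius norm of a real matrix. -/
def frobNorm {m n : ℕ} (A : Matrix (Fin m) (Fin n) ℝ) : ℝ :=
  Real.sqrt (∑ i, ∑ j, (A i j) ^ 2)

/-- Realization of an affine SNN: affine encoder, positive SNN, affine decoder. -/
def affineReal (G : NetworkGraph V) (w d : V × V → ℝ) {din dout d0 d1 : ℕ}
    (ein : Fin din → V) (eout : Fin dout → V)
    (Win : Matrix (Fin din) (Fin d0) ℝ) (bin : Fin din → ℝ)
    (Wout : Matrix (Fin d1) (Fin dout) ℝ) (bout : Fin d1 → ℝ)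
    (x : Fin d0 → ℝ) : Fin d1 → ℝ :=
  Wout.mulVec (snnReal G w d ein eout (Win.mulVec x + bin)) + bout

/-- ℓ∞ distance of the parameters (weights and delays) of two SNNs on the same graph. -/
def paramDist (G : NetworkGraph V) (w d w' d' : V × V → ℝ) : ℝ :=
  sSup ((fun e => max |w e - w' e| |d e - d' e|) '' (G.E : Set (V × V)))

/-- An affine spiking neural network with input dimension `d0` and output dimension `d1`:
a positive SNN together with enumerations of its input/output nodes and an affine
encoder/decoder pair. -/
structure AffSNN (d0 d1 : ℕ) where
  n : ℕ
  din : ℕ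
  dout : ℕ
  G : NetworkGraph (Fin n)
  w : Fin n × Fin n → ℝ
  dl : Fin n × Fin n → ℝ
  ein : Fin din → Fin n
  eout : Fin dout → Fin n
  Win : Matrix (Fin din) (Fin d0) ℝ
  bin : Fin din → ℝ
  Wout : Matrix (Fin d1) (Fin dout) ℝ
  bout : Fin d1 → ℝ
  w_pos : ∀ e ∈ G.E, 0 < w e
  dl_nonneg : ∀ e ∈ G.E, 0 ≤ dl e
  ein_inj : Function.Injective ein
  ein_range : Set.range ein = G.Vin
  eout_inj : Function.Injective eout
  eout_range : Set.range eout = G.Vout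

/-- Realization of an affine SNN. -/
def AffSNN.real {d0 d1 : ℕ} (Ψ : AffSNN d0 d1) : (Fin d0 → ℝ) → Fin d1 → ℝ :=
  affineReal Ψ.G Ψ.w Ψ.dl Ψ.ein Ψ.eout Ψ.Win Ψ.bin Ψ.Wout Ψ.bout

/-- Size of an affine SNN: the number of nonzero scalar entries of
`(W, D, W_in, W_out, b_in, b_out)`. -/
def AffSNN.size {d0 d1 : ℕ} (Ψ : AffSNN d0 d1) : ℕ :=
  {e | e ∈ Ψ.G.E ∧ Ψ.w e ≠ 0}.ncard + {e | e ∈ Ψ.G.E ∧ Ψ.dl e ≠ 0}.ncard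
    + {p : Fin Ψ.din × Fin d0 | Ψ.Win p.1 p.2 ≠ 0}.ncard
    + {p : Fin d1 × Fin Ψ.dout | Ψ.Wout p.1 p.2 ≠ 0}.ncard
    + {i : Fin Ψ.din | Ψ.bin i ≠ 0}.ncard + {i : Fin d1 | Ψ.bout i ≠ 0}.ncard

/-- All scalar weights of the affine SNN are bounded above in absolute value by `C`. -/
def AffSNN.weightsBddAbove {d0 d1 : ℕ} (Ψ : AffSNN d0 d1) (C : ℝ) : Prop :=
  (∀ e ∈ Ψ.G.E, |Ψ.w e| ≤ C) ∧ (∀ e ∈ Ψ.G.E, |Ψ.dl e| ≤ C) ∧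
  (∀ i j, |Ψ.Win i j| ≤ C) ∧ (∀ i, |Ψ.bin i| ≤ C) ∧
  (∀ i j, |Ψ.Wout i j| ≤ C) ∧ (∀ i, |Ψ.bout i| ≤ C)

/-- All synaptic weights of the affine SNN are bounded below by `c`. -/
def AffSNN.synBddBelow {d0 d1 : ℕ} (Ψ : AffSNN d0 d1) (c : ℝ) : Prop :=
  ∀ e ∈ Ψ.G.E, c ≤ Ψ.w e

/-- Clipping to the interval `[0,1]`. -/
def clip01 (y : ℝ) : ℝ := max 0 (min 1 y)

/-- The hypothesis class of `[0,1]`-clipped realizations of affine SNNs on a fixed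
network graph with parameters bounded as in `P*_SNN(G, d⃗; b, B)` (with `d1 = 1`). -/
def clippedClass (G : NetworkGraph V) {din dout : ℕ} (ein : Fin din → V) (eout : Fin dout → V)
    (b B : ℝ) (d0 : ℕ) : Set ((Fin d0 → ℝ) → ℝ) :=
  { f | ∃ (Win : Matrix (Fin din) (Fin d0) ℝ) (bin : Fin din → ℝ)
        (w dl : V × V → ℝ) (Wout : Matrix (Fin 1) (Fin dout) ℝ) (bout : Fin 1 → ℝ),
      (∀ i j, Win i j ∈ Set.Icc (-B) B) ∧ (∀ i, bin i ∈ Set.Icc (-B) B) ∧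
      (∀ e ∈ G.E, w e ∈ Set.Icc b B) ∧ (∀ e ∈ G.E, dl e ∈ Set.Icc 0 B) ∧
      (∀ i j, Wout i j ∈ Set.Icc (-B) B) ∧ (∀ i, bout i ∈ Set.Icc (-B) B) ∧
      f = fun x => clip01 (affineReal G w dl ein eout Win bin Wout bout x 0) }

/-- The Lipschitz constant `L*` from the covering-number estimate. -/
def Lstar (d0 din dout L : ℕ) (b B : ℝ) : ℝ :=
  (dout : ℝ) * (2 * Real.sqrt din * d0 * B + B * L * (1 + 1 / b ^ 2)
    + 2 * B + L * (1 / b + B)) + 1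

/-- A regular triangulation of a compact set `Ω ⊆ ℝ^{d0}`, with simplices recorded by
their vertex sets. -/
structure RegTriangulation (d0 : ℕ) (Ω : Set (Fin d0 → ℝ)) where
  nodes : Finset (Fin d0 → ℝ)
  faces : Finset (Finset (Fin d0 → ℝ))
  nodes_sub : (nodes : Set (Fin d0 → ℝ)) ⊆ Ω
  card_face : ∀ S ∈ faces, S.card = d0 + 1
  indep : ∀ S ∈ faces, AffineIndependent ℝ ((↑) : {x // x ∈ S} → (Fin d0 → ℝ))
  face_nodes : ∀ S ∈ faces,
    (nodes : Set (Fin d0 → ℝ)) ∩ convexHull ℝ (S : Set (Fin d0 → ℝ)) = (S : Set (Fin d0 → ℝ))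
  cover : Ω = ⋃ S ∈ faces, convexHull ℝ (S : Set (Fin d0 → ℝ))
  inter : ∀ S ∈ faces, ∀ S' ∈ faces,
    convexHull ℝ (S : Set (Fin d0 → ℝ)) ∩ convexHull ℝ (S' : Set (Fin d0 → ℝ))
      = convexHull ℝ ((S ∩ S' : Finset (Fin d0 → ℝ)) : Set (Fin d0 → ℝ))

/-- Euclidean distance on `ℝ^{d0}` (realized as `Fin d0 → ℝ`). -/
def eudist {d0 : ℕ} (x y : Fin d0 → ℝ) : ℝ := Real.sqrt (∑ i, (x i - y i) ^ 2)

/-- Minimal mesh size: the minimal distance between two distinct nodes of a simplex. -/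
def hmin {d0 : ℕ} {Ω : Set (Fin d0 → ℝ)} (T : RegTriangulation d0 Ω) : ℝ :=
  sInf { r | ∃ S ∈ T.faces, ∃ x ∈ S, ∃ y ∈ S, x ≠ y ∧ r = eudist x y }

/-- Maximal mesh size: the maximal distance between two nodes of a simplex. -/
def hmax {d0 : ℕ} {Ω : Set (Fin d0 → ℝ)} (T : RegTriangulation d0 Ω) : ℝ :=
  sSup { r | ∃ S ∈ T.faces, ∃ x ∈ S, ∃ y ∈ S, r = eudist x y }

/-- `f` belongs to the linear finite element space `V_T`: it is continuous on `Ω` and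
affine on each simplex of `T`. -/
def PiecewiseAffineOn {d0 : ℕ} {Ω : Set (Fin d0 → ℝ)} (T : RegTriangulation d0 Ω)
    (f : (Fin d0 → ℝ) → ℝ) : Prop :=
  ContinuousOn f Ω ∧ ∀ S ∈ T.faces, ∃ (a : Fin d0 → ℝ) (c : ℝ),
    ∀ x ∈ convexHull ℝ (S : Set (Fin d0 → ℝ)), f x = ∑ i, a i * x i + c

/-- Admissibility of a compact domain: existence of quasi-uniform triangulations. -/
def Admissible (d0 : ℕ) (Ω : Set (Fin d0 → ℝ)) : Prop :=
  ∃ C1 C2 c2 : ℝ, 0 < C1 ∧ 0 < C2 ∧ 0 < c2 ∧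
    ∀ N : ℕ, 0 < N → ∃ T : RegTriangulation d0 Ω,
      (T.faces.card : ℝ) ≤ C1 * N ∧
      c2 * (N : ℝ) ^ (-(1 : ℝ) / d0) ≤ hmin T ∧
      hmin T ≤ hmax T ∧
      hmax T ≤ C2 * (N : ℝ) ^ (-(1 : ℝ) / d0)

/-- The `W^{s,∞}(Ω)` norm (for `C^s` functions): supremum over `Ω` of the norms of the
iterated derivatives of order at most `s`. -/
def sobNorm {d0 : ℕ} (s : ℕ) (Ω : Set (Fin d0 → ℝ)) (f : (Fin d0 → ℝ) → ℝ) : ℝ :=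
  sSup { r | ∃ k ≤ s, ∃ x ∈ Ω, r = ‖iteratedFDeriv ℝ k f x‖ }

/-- The `L^∞(Ω)` norm. -/
def supNormOn {d0 : ℕ} (Ω : Set (Fin d0 → ℝ)) (f : (Fin d0 → ℝ) → ℝ) : ℝ :=
  sSup ((fun x => |f x|) '' Ω)

/-- The Barron class `Γ_K`. -/
def BarronClass (d0 : ℕ) (K : ℝ) (f : (Fin d0 → ℝ) → ℝ) : Prop :=
  MeasureTheory.LocallyIntegrable f MeasureTheory.volume ∧
  ∃ g : (Fin d0 → ℝ) → ℂ, Measurable g ∧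
    (∀ x, (f x : ℂ) = ∫ ξ, Complex.exp (Complex.I * ((∑ i, x i * ξ i : ℝ) : ℂ)) * g ξ) ∧
    (∫ ξ, eudist ξ 0 * ‖g ξ‖) ≤ K

theorem potential_congr (G : NetworkGraph V) (w d : V × V → ℝ) {t t' : V → ℝ} {v : V}
    (h : ∀ u, (u, v) ∈ G.E → t u = t' u) (s : ℝ) :
    potential G w d t v s = potential G w d t' v s := by
  unfold potential
  refine Finset.sum_congr rfl fun u hu => ?_
  rw [h u (Finset.mem_filter.mp hu).2]

theorem exists_isLeast_potential (G : NetworkGraph V) (w d : V × V → ℝ)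
    (hw : ∀ e ∈ G.E, 0 ≤ w e) {v : V} {u0 : V} (hu0 : (u0, v) ∈ G.E)
    (hw0 : 0 < w (u0, v)) (t : V → ℝ) :
    ∃ s, IsLeast {s : ℝ | potential G w d t v s = 1} s := by
  classical
  set F : Finset V := Finset.univ.filter (fun u => (u, v) ∈ G.E) with hF
  have hu0F : u0 ∈ F := Finset.mem_filter.mpr ⟨Finset.mem_univ _, hu0⟩
  have hFne : F.Nonempty := ⟨u0, hu0F⟩
  set P : ℝ → ℝ := fun s => potential G w d t v s with hP
  have hc : Continuous P := by
    apply continuous_finset_sum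
    intro u _
    exact continuous_const.mul
      (((continuous_id.sub continuous_const).sub continuous_const).max continuous_const)
  set m : ℝ := F.inf' hFne (fun u => t u + d (u, v)) with hm
  have h0 : ∀ s ≤ m, P s = 0 := by
    intro s hs
    apply Finset.sum_eq_zero
    intro u hu
    have hle : s ≤ t u + d (u, v) := le_trans hs (Finset.inf'_le _ hu)
    have hr : relu (s - t u - d (u, v)) = 0 := by
      unfold relu; rw [max_eq_right]; linarith
    rw [hr, mul_zero]
  set s1 : ℝ := max m (t u0 + d (u0, v) + 1 / w (u0, v)) with hs1
  have h1 : 1 ≤ P s1 := by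
    have hterm : w (u0, v) * relu (s1 - t u0 - d (u0, v)) ≤ P s1 := by
      apply Finset.single_le_sum (f := fun u => w (u, v) * relu (s1 - t u - d (u, v)))
        (fun u hu => ?_) hu0F
      exact mul_nonneg (hw _ (Finset.mem_filter.mp hu).2) (le_max_right _ _)
    have hge : 1 / w (u0, v) ≤ relu (s1 - t u0 - d (u0, v)) := by
      have h2 : t u0 + d (u0, v) + 1 / w (u0, v) ≤ s1 := le_max_right _ _
      unfold relu
      refine le_trans (by linarith) (le_max_left _ _)
    have h3 : 1 ≤ w (u0, v) * relu (s1 - t u0 - d (u0, v)) := by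
      calc (1 : ℝ) = w (u0, v) * (1 / w (u0, v)) := by field_simp
        _ ≤ w (u0, v) * relu (s1 - t u0 - d (u0, v)) :=
          mul_le_mul_of_nonneg_left hge hw0.le
    linarith
  have hms1 : m ≤ s1 := le_max_left _ _
  have hivt : ∃ s ∈ Set.Icc m s1, P s = 1 := by
    have h1' : (1 : ℝ) ∈ Set.Icc (P m) (P s1) := by
      constructor
      · rw [h0 m le_rfl]; norm_num
      · exact h1
    obtain ⟨s, hs, hPs⟩ := intermediate_value_Icc hms1 hc.continuousOn h1'
    exact ⟨s, hs, hPs⟩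
  obtain ⟨s0, _, hs0⟩ := hivt
  have hne : {s : ℝ | P s = 1}.Nonempty := ⟨s0, hs0⟩
  have hclosed : IsClosed {s : ℝ | P s = 1} := isClosed_eq hc continuous_const
  have hbdd : BddBelow {s : ℝ | P s = 1} := by
    refine ⟨m, fun x hx => ?_⟩
    by_contra hxm
    push_neg at hxm
    have h4 := h0 x hxm.le
    rw [Set.mem_setOf_eq] at hx
    rw [hx] at h4; norm_num at h4
  exact ⟨sInf _, hclosed.csInf_mem hne hbdd, fun x hx => csInf_le hbdd hx⟩

open Classical in
/-- The body of the well-founded recursion defining the spike times. -/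
def spikeBody (G : NetworkGraph V) (w d : V × V → ℝ) (tin : V → ℝ)
    (v : V) (rec : ∀ u, (u, v) ∈ G.E → ℝ) : ℝ :=
  if h : v ∈ G.Vin then tin v
  else sInf {s : ℝ |
    potential G w d (fun u => if h' : (u, v) ∈ G.E then rec u h' else 0) v s = 1}

/-- The spike-time assignment defined by well-founded recursion. -/
def spikeSol (G : NetworkGraph V) (w d : V × V → ℝ) (tin : V → ℝ) : V → ℝ :=
  WellFounded.fix G.acyclic (spikeBody G w d tin)

theorem spikeSol_eq (G : NetworkGraph V) (w d : V × V → ℝ) (tin : V → ℝ) (v : V) :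
    spikeSol G w d tin v = spikeBody G w d tin v (fun u _ => spikeSol G w d tin u) :=
  WellFounded.fix_eq G.acyclic (spikeBody G w d tin) v

end
/-- Lemma: well-definedness of potentials and spike times.
For an SNN on a network graph with nonnegative weights, nonnegative delays, ReLU
responses, and a positive-weight incoming synapse at every non-input node, for any
input spike times there is a unique consistent assignment of spike times; in
particular, for every non-input node the set `{t : P_v(t) = 1}` is nonempty and its
minimum exists and is unique. -/
theorem statement0 {V : Type} [Fintype V] [DecidableEq V]
    (G : NetworkGraph V) (w d : V × V → ℝ)
    (hw : ∀ e ∈ G.E, 0 ≤ w e) (hd : ∀ e ∈ G.E, 0 ≤ d e)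
    (hpos : ∀ v : V, v ∉ G.Vin → ∃ u, (u, v) ∈ G.E ∧ 0 < w (u, v))
    (tin : V → ℝ) :
    ∃! t : V → ℝ, IsSpikeMap G w d tin t := by
  classical
  set t : V → ℝ := spikeSol G w d tin with htdef
  have ht : IsSpikeMap G w d tin t := by
    constructor
    · intro v hv
      rw [htdef, spikeSol_eq, spikeBody, dif_pos hv]
    · intro v hv
      obtain ⟨u0, hu0, hw0⟩ := hpos v hv
      obtain ⟨s, hs⟩ := exists_isLeast_potential G w d hw hu0 hw0 t
      have hpc : ∀ s : ℝ,
          potential G w d (fun u => if h' : (u, v) ∈ G.E then spikeSol G w d tin u else 0) v s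
            = potential G w d t v s := fun s =>
        potential_congr G w d
          (t := fun u => if h' : (u, v) ∈ G.E then spikeSol G w d tin u else 0)
          (t' := t) (fun u hu => by simp only [dif_pos hu, htdef]) s
      have heq : t v = sInf {s : ℝ | potential G w d t v s = 1} := by
        rw [htdef, spikeSol_eq, spikeBody, dif_neg hv]
        congr 1
        ext s
        simp only [Set.mem_setOf_eq, hpc s]
        exact Iff.rfl
      rw [heq, hs.csInf_eq]
      exact hs
  refine ⟨t, ht, ?_⟩
  intro t' ht'
  funext v
  refine WellFounded.induction G.acyclic (C := fun v => t' v = t v) v ?_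
  intro v ih
  by_cases hv : v ∈ G.Vin
  · rw [ht'.1 v hv, ht.1 v hv]
  · have hset : {s : ℝ | potential G w d t' v s = 1} = {s : ℝ | potential G w d t v s = 1} := by
      ext s
      simp only [Set.mem_setOf_eq]
      rw [potential_congr G w d (fun u hu => ih u hu) s]
    have h1 := ht'.2 v hv
    have h2 := ht.2 v hv
    rw [hset] at h1
    exact h1.unique h2
end

section
/- Let Ψ = (A_in, Φ, A_out) be an affine SNN with encoder A_in(x)=W_in x + b_in : ℝ^{d_0} → ℝ^{d_in} and decoder A_out(z)=W_out z + b_out : ℝ^{d_out} → ℝ^{d_1}. Then for all x, x̃ ∈ ℝ^{d_0}: ‖R(Ψ)(x) − R(Ψ)(x̃)‖_{ℓ∞} ≤ (d_0 · d_out)^{1/2} · ‖W_in‖_F · ‖W_out‖_F · ‖x − x̃‖_{ℓ∞}, where ‖·‖_F denotes the Frobenius norm. -/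
open scoped BigOperators

section Aux

open Finset

lemma relu_continuous : Continuous relu := continuous_id.max continuous_const

lemma relu_nonneg' (t : ℝ) : 0 ≤ relu t := le_max_right _ _

lemma relu_of_nonpos' {t : ℝ} (h : t ≤ 0) : relu t = 0 := max_eq_right h

/-- Core analytic lemma: the threshold-crossing set of a positive ReLU sum has a least element. -/
lemma core_isLeast {ι : Type*} (s : Finset ι) (hs : s.Nonempty) (w a : ι → ℝ)
    (hw : ∀ i ∈ s, 0 < w i) :
    ∃ t, IsLeast {x : ℝ | ∑ i ∈ s, w i * relu (x - a i) = 1} t := by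
  set P : ℝ → ℝ := fun x => ∑ i ∈ s, w i * relu (x - a i) with hPdef
  have hPc : Continuous P := by
    apply continuous_finset_sum
    intro i _
    exact continuous_const.mul (relu_continuous.comp (continuous_id.sub continuous_const))
  obtain ⟨i0, hi0⟩ := hs
  set m := s.inf' ⟨i0, hi0⟩ a with hm
  have hPm : P m = 0 := by
    apply Finset.sum_eq_zero
    intro i hi
    rw [relu_of_nonpos' (sub_nonpos.mpr (Finset.inf'_le a hi)), mul_zero]
  set x1 := s.sup' ⟨i0, hi0⟩ a + 1 / w i0 with hx1def
  have hx1 : 1 ≤ P x1 := by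
    have hwi0 := hw i0 hi0
    have h2 : 1 / w i0 ≤ relu (x1 - a i0) := by
      have h3 : a i0 ≤ s.sup' ⟨i0, hi0⟩ a := Finset.le_sup' a hi0
      have : 1 / w i0 ≤ x1 - a i0 := by rw [hx1def]; linarith
      exact le_trans this (le_max_left _ _)
    have h1 : 1 ≤ w i0 * relu (x1 - a i0) := by
      calc (1:ℝ) = w i0 * (1 / w i0) := by field_simp
        _ ≤ w i0 * relu (x1 - a i0) := mul_le_mul_of_nonneg_left h2 hwi0.le
    exact h1.trans (Finset.single_le_sum (f := fun i => w i * relu (x1 - a i))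
      (fun i hi => mul_nonneg (hw i hi).le (relu_nonneg' _)) hi0)
  have hmx1 : m ≤ x1 := by
    have hwi0 := hw i0 hi0
    have h3 : m ≤ a i0 := Finset.inf'_le a hi0
    have h4 : a i0 ≤ s.sup' ⟨i0, hi0⟩ a := Finset.le_sup' a hi0
    have : 0 < 1 / w i0 := by positivity
    rw [hx1def]; linarith
  obtain ⟨x, _, hPx⟩ := intermediate_value_Icc hmx1 hPc.continuousOn
    (Set.mem_Icc.mpr ⟨by rw [hPm]; norm_num, hx1⟩)
  set S := {x : ℝ | P x = 1} with hS
  have hSne : S.Nonempty := ⟨x, hPx⟩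
  have hSbdd : BddBelow S := by
    refine ⟨m, fun y hy => ?_⟩
    by_contra hlt
    push_neg at hlt
    have : P y = 0 := by
      apply Finset.sum_eq_zero
      intro i hi
      have : y ≤ a i := le_trans hlt.le (Finset.inf'_le a hi)
      rw [relu_of_nonpos' (by linarith), mul_zero]
    have hy1 : P y = 1 := hy
    rw [this] at hy1; norm_num at hy1
  have hScl : IsClosed S := isClosed_singleton.preimage hPc
  exact ⟨sInf S, hScl.csInf_mem hSne hSbdd, fun y hy => csInf_le hSbdd hy⟩

/-- Core comparison lemma. -/
lemma core_le {ι : Type*} {s : Finset ι} (hs : s.Nonempty) (w a a' : ι → ℝ)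
    (hw : ∀ i ∈ s, 0 < w i) (ha : ∀ i ∈ s, a i ≤ a' i) {t t' : ℝ}
    (h : IsLeast {x : ℝ | ∑ i ∈ s, w i * relu (x - a i) = 1} t)
    (h' : IsLeast {x : ℝ | ∑ i ∈ s, w i * relu (x - a' i) = 1} t') : t ≤ t' := by
  set P : ℝ → ℝ := fun x => ∑ i ∈ s, w i * relu (x - a i) with hPdef
  have hPc : Continuous P := by
    apply continuous_finset_sum
    intro i _
    exact continuous_const.mul (relu_continuous.comp (continuous_id.sub continuous_const))
  set m := s.inf' hs a with hm
  have hPm : P m = 0 := by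
    apply Finset.sum_eq_zero
    intro i hi
    rw [relu_of_nonpos' (sub_nonpos.mpr (Finset.inf'_le a hi)), mul_zero]
  have hmt' : m ≤ t' := by
    by_contra hlt
    push_neg at hlt
    have h0 : ∑ i ∈ s, w i * relu (t' - a' i) = 0 := by
      apply Finset.sum_eq_zero
      intro i hi
      have h1 : m ≤ a i := Finset.inf'_le a hi
      have h2 : a i ≤ a' i := ha i hi
      rw [relu_of_nonpos' (by linarith), mul_zero]
    have h1 : ∑ i ∈ s, w i * relu (t' - a' i) = 1 := h'.1
    rw [h0] at h1; norm_num at h1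
  have hPt' : 1 ≤ P t' := by
    have : ∑ i ∈ s, w i * relu (t' - a' i) ≤ P t' := by
      apply Finset.sum_le_sum
      intro i hi
      apply mul_le_mul_of_nonneg_left _ (hw i hi).le
      exact max_le_max (by have := ha i hi; linarith) le_rfl
    have h1 : ∑ i ∈ s, w i * relu (t' - a' i) = 1 := h'.1
    linarith
  obtain ⟨x, hxmem, hPx⟩ := intermediate_value_Icc hmt' hPc.continuousOn
    (Set.mem_Icc.mpr ⟨by rw [hPm]; norm_num, hPt'⟩)
  exact le_trans (h.2 hPx) hxmem.2

variable {V : Type} [Fintype V] [DecidableEq V]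

lemma potential_eq_sum (G : NetworkGraph V) (w d : V × V → ℝ) (t : V → ℝ) (v : V) (s : ℝ) :
    potential G w d t v s
      = ∑ u ∈ Finset.univ.filter (fun u => (u, v) ∈ G.E),
          w (u, v) * relu (s - (t u + d (u, v))) := by
  simp [potential, sub_sub]

lemma preds_nonempty {G : NetworkGraph V} {v : V} (hv : v ∉ G.Vin) :
    (Finset.univ.filter (fun u => (u, v) ∈ G.E)).Nonempty := by
  simp only [NetworkGraph.Vin, Set.mem_setOf_eq, not_forall, not_not] at hv
  obtain ⟨u, hu⟩ := hv
  exact ⟨u, by simp [hu]⟩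

open Classical in
/-- Construction of a spike map by well-founded recursion on the DAG. -/
noncomputable def buildT (G : NetworkGraph V) (w d : V × V → ℝ) (tin : V → ℝ) : V → ℝ :=
  G.acyclic.fix (fun v rec =>
    if v ∈ G.Vin then tin v
    else sInf {s : ℝ | ∑ u ∈ (Finset.univ.filter (fun u => (u, v) ∈ G.E)).attach,
        w (u.1, v) * relu (s - rec u.1 (Finset.mem_filter.mp u.2).2 - d (u.1, v)) = 1})

open Classical in
lemma buildT_eq (G : NetworkGraph V) (w d : V × V → ℝ) (tin : V → ℝ) (v : V) :
    buildT G w d tin v = if v ∈ G.Vin then tin v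
      else sInf {s : ℝ | potential G w d (buildT G w d tin) v s = 1} := by
  by_cases hv : v ∈ G.Vin
  · rw [buildT, WellFounded.fix_eq, if_pos hv, if_pos hv]
  · rw [buildT, WellFounded.fix_eq, if_neg hv, if_neg hv]
    congr 1
    ext s
    show (∑ u ∈ (Finset.univ.filter (fun u => (u, v) ∈ G.E)).attach,
        w (u.1, v) * relu (s - buildT G w d tin u.1 - d (u.1, v)) = 1)
      ↔ potential G w d (buildT G w d tin) v s = 1
    rw [Finset.sum_attach (Finset.univ.filter (fun u => (u, v) ∈ G.E))
      (fun u => w (u, v) * relu (s - buildT G w d tin u - d (u, v)))]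
    exact Iff.rfl

lemma isSpikeMap_buildT (G : NetworkGraph V) (w d : V × V → ℝ)
    (hw : ∀ e ∈ G.E, 0 < w e) (tin : V → ℝ) :
    IsSpikeMap G w d tin (buildT G w d tin) := by
  constructor
  · intro v hv
    rw [buildT_eq, if_pos hv]
  · intro v hv
    have hne := preds_nonempty hv
    obtain ⟨t0, ht0⟩ := core_isLeast _ hne (fun u => w (u, v))
      (fun u => buildT G w d tin u + d (u, v))
      (fun u hu => hw _ (Finset.mem_filter.mp hu).2)
    have hset : {x : ℝ | ∑ u ∈ Finset.univ.filter (fun u => (u, v) ∈ G.E),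
        w (u, v) * relu (x - (buildT G w d tin u + d (u, v))) = 1}
        = {s : ℝ | potential G w d (buildT G w d tin) v s = 1} := by
      ext s
      rw [Set.mem_setOf_eq, Set.mem_setOf_eq, potential_eq_sum]
    rw [hset] at ht0
    rw [buildT_eq G w d tin v, if_neg hv, ht0.csInf_eq]
    exact ht0

lemma spike_mono (G : NetworkGraph V) (w d : V × V → ℝ) (hw : ∀ e ∈ G.E, 0 < w e)
    {tin tin' t t' : V → ℝ}
    (h : IsSpikeMap G w d tin t) (h' : IsSpikeMap G w d tin' t')
    (hle : ∀ v ∈ G.Vin, tin v ≤ tin' v) : ∀ v, t v ≤ t' v := by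
  intro v
  refine G.acyclic.induction (C := fun v => t v ≤ t' v) v ?_
  intro v IH
  by_cases hv : v ∈ G.Vin
  · rw [h.1 v hv, h'.1 v hv]; exact hle v hv
  · have hne := preds_nonempty hv
    have H := h.2 v hv
    have H' := h'.2 v hv
    have hset : ∀ (f : V → ℝ), {s : ℝ | potential G w d f v s = 1}
        = {x : ℝ | ∑ u ∈ Finset.univ.filter (fun u => (u, v) ∈ G.E),
            w (u, v) * relu (x - (f u + d (u, v))) = 1} := by
      intro f; ext s
      rw [Set.mem_setOf_eq, Set.mem_setOf_eq, potential_eq_sum]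
    rw [hset] at H
    rw [hset] at H'
    exact core_le hne (fun u => w (u, v)) (fun u => t u + d (u, v)) (fun u => t' u + d (u, v))
      (fun u hu => hw _ (Finset.mem_filter.mp hu).2)
      (fun u hu => by have := IH u (Finset.mem_filter.mp hu).2; linarith) H H'

lemma spike_shift (G : NetworkGraph V) (w d : V × V → ℝ) {tin t : V → ℝ}
    (h : IsSpikeMap G w d tin t) (c : ℝ) :
    IsSpikeMap G w d (fun v => tin v + c) (fun v => t v + c) := by
  constructor
  · intro v hv; simp [h.1 v hv]
  · intro v hv
    have key : ∀ s : ℝ, potential G w d (fun u => t u + c) v s = potential G w d t v (s - c) := by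
      intro s
      unfold potential
      apply Finset.sum_congr rfl
      intro u _
      congr 1
      congr 1
      ring
    constructor
    · show potential G w d (fun u => t u + c) v (t v + c) = 1
      rw [key]
      have := (h.2 v hv).1
      simpa using this
    · intro s hs
      rw [Set.mem_setOf_eq, key] at hs
      have := (h.2 v hv).2 hs
      show t v + c ≤ s
      linarith

lemma spikeMap_dist (G : NetworkGraph V) (w d : V × V → ℝ) (hw : ∀ e ∈ G.E, 0 < w e)
    (tin tin' : V → ℝ) {δ : ℝ}
    (hb : ∀ v ∈ G.Vin, |tin v - tin' v| ≤ δ) (v : V) :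
    |spikeMap G w d tin v - spikeMap G w d tin' v| ≤ δ := by
  have hE : ∃ t, IsSpikeMap G w d tin t := ⟨_, isSpikeMap_buildT G w d hw tin⟩
  have hE' : ∃ t, IsSpikeMap G w d tin' t := ⟨_, isSpikeMap_buildT G w d hw tin'⟩
  rw [spikeMap, spikeMap, dif_pos hE, dif_pos hE']
  have ht := hE.choose_spec
  have ht' := hE'.choose_spec
  have h1 : hE.choose v ≤ hE'.choose v + δ := by
    have := spike_mono G w d hw ht (spike_shift G w d ht' δ)
      (fun u hu => by have := abs_le.mp (hb u hu); linarith [this.2])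
    exact this v
  have h2 : hE'.choose v ≤ hE.choose v + δ := by
    have := spike_mono G w d hw ht' (spike_shift G w d ht δ)
      (fun u hu => by have := abs_le.mp (hb u hu); linarith [this.1])
    exact this v
  rw [abs_sub_le_iff]
  constructor <;> linarith

lemma frobNorm_nonneg {m n : ℕ} (A : Matrix (Fin m) (Fin n) ℝ) : 0 ≤ frobNorm A :=
  Real.sqrt_nonneg _

lemma row_abs_sum_le {m n : ℕ} (A : Matrix (Fin m) (Fin n) ℝ) (i : Fin m) :
    ∑ j, |A i j| ≤ Real.sqrt n * frobNorm A := by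
  have h1 : (∑ j, |A i j|) ^ 2 ≤ (n : ℝ) * ∑ j, (A i j) ^ 2 := by
    have := Finset.sum_mul_sq_le_sq_mul_sq Finset.univ (fun _ : Fin n => (1 : ℝ))
      (fun j => |A i j|)
    simpa [sq_abs] using this
  have h2 : ∑ j, (A i j) ^ 2 ≤ ∑ i', ∑ j, (A i' j) ^ 2 :=
    Finset.single_le_sum (f := fun i' => ∑ j, (A i' j) ^ 2)
      (fun i' _ => Finset.sum_nonneg fun j _ => sq_nonneg _) (Finset.mem_univ i)
  have h3 : 0 ≤ ∑ j, |A i j| := Finset.sum_nonneg fun j _ => abs_nonneg _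
  calc ∑ j, |A i j| = Real.sqrt ((∑ j, |A i j|) ^ 2) := (Real.sqrt_sq h3).symm
    _ ≤ Real.sqrt ((n : ℝ) * ∑ j, (A i j) ^ 2) := Real.sqrt_le_sqrt h1
    _ = Real.sqrt n * Real.sqrt (∑ j, (A i j) ^ 2) := Real.sqrt_mul (Nat.cast_nonneg n) _
    _ ≤ Real.sqrt n * frobNorm A := by
      apply mul_le_mul_of_nonneg_left _ (Real.sqrt_nonneg _)
      exact Real.sqrt_le_sqrt h2

end Aux


/-- Theorem: Lipschitz continuity of an affine SNN in its input.
For every affine SNN `Ψ` and all inputs `x, x̃`,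
`‖R(Ψ)(x) − R(Ψ)(x̃)‖_∞ ≤ (d0·dout)^{1/2}·‖W_in‖_F·‖W_out‖_F·‖x − x̃‖_∞`. -/
theorem statement1 {d0 d1 : ℕ} (Ψ : AffSNN d0 d1) (x x' : Fin d0 → ℝ) :
    ‖Ψ.real x - Ψ.real x'‖ ≤
      Real.sqrt ((d0 : ℝ) * (Ψ.dout : ℝ)) * frobNorm Ψ.Win * frobNorm Ψ.Wout * ‖x - x'‖ := by
  set y : Fin Ψ.din → ℝ := Ψ.Win.mulVec x + Ψ.bin with hy_def
  set y' : Fin Ψ.din → ℝ := Ψ.Win.mulVec x' + Ψ.bin with hy'_def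
  set δ : ℝ := Real.sqrt d0 * frobNorm Ψ.Win * ‖x - x'‖ with hδ_def
  have hδ0 : (0:ℝ) ≤ δ :=
    mul_nonneg (mul_nonneg (Real.sqrt_nonneg _) (frobNorm_nonneg _)) (norm_nonneg _)
  have hy : ∀ i, |y i - y' i| ≤ δ := by
    intro i
    have hrow : y i - y' i = ∑ j, Ψ.Win i j * (x j - x' j) := by
      simp [hy_def, hy'_def, Matrix.mulVec, dotProduct, mul_sub,
        Finset.sum_sub_distrib]
    calc |y i - y' i| = |∑ j, Ψ.Win i j * (x j - x' j)| := by rw [hrow]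
      _ ≤ ∑ j, |Ψ.Win i j * (x j - x' j)| := Finset.abs_sum_le_sum_abs _ _
      _ ≤ ∑ j, |Ψ.Win i j| * ‖x - x'‖ := by
          apply Finset.sum_le_sum
          intro j _
          rw [abs_mul]
          apply mul_le_mul_of_nonneg_left _ (abs_nonneg _)
          have := norm_le_pi_norm (x - x') j
          simpa [Real.norm_eq_abs] using this
      _ = (∑ j, |Ψ.Win i j|) * ‖x - x'‖ := (Finset.sum_mul _ _ _).symm
      _ ≤ (Real.sqrt d0 * frobNorm Ψ.Win) * ‖x - x'‖ :=
          mul_le_mul_of_nonneg_right (row_abs_sum_le _ _) (norm_nonneg _)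
  have htin : ∀ v ∈ Ψ.G.Vin,
      |Function.extend Ψ.ein y (fun _ => 0) v - Function.extend Ψ.ein y' (fun _ => 0) v| ≤ δ := by
    intro v hv
    rw [← Ψ.ein_range] at hv
    obtain ⟨i, rfl⟩ := hv
    rw [Ψ.ein_inj.extend_apply, Ψ.ein_inj.extend_apply]
    exact hy i
  have hz : ∀ j, |snnReal Ψ.G Ψ.w Ψ.dl Ψ.ein Ψ.eout y j
      - snnReal Ψ.G Ψ.w Ψ.dl Ψ.ein Ψ.eout y' j| ≤ δ := fun j =>
    spikeMap_dist Ψ.G Ψ.w Ψ.dl Ψ.w_pos _ _ htin (Ψ.eout j)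
  have hRHS : (0:ℝ) ≤ Real.sqrt ((d0 : ℝ) * (Ψ.dout : ℝ)) * frobNorm Ψ.Win
      * frobNorm Ψ.Wout * ‖x - x'‖ :=
    mul_nonneg (mul_nonneg (mul_nonneg (Real.sqrt_nonneg _) (frobNorm_nonneg _))
      (frobNorm_nonneg _)) (norm_nonneg _)
  rw [pi_norm_le_iff_of_nonneg hRHS]
  intro i
  set z : Fin Ψ.dout → ℝ := snnReal Ψ.G Ψ.w Ψ.dl Ψ.ein Ψ.eout y with hz_def
  set z' : Fin Ψ.dout → ℝ := snnReal Ψ.G Ψ.w Ψ.dl Ψ.ein Ψ.eout y' with hz'_def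
  have hcoord : (Ψ.real x - Ψ.real x') i = ∑ j, Ψ.Wout i j * (z j - z' j) := by
    simp [AffSNN.real, affineReal, Matrix.mulVec, dotProduct, mul_sub,
      Finset.sum_sub_distrib, hz_def, hz'_def, hy_def, hy'_def]
  have hbound : |(Ψ.real x - Ψ.real x') i| ≤ (Real.sqrt Ψ.dout * frobNorm Ψ.Wout) * δ := by
    calc |(Ψ.real x - Ψ.real x') i| = |∑ j, Ψ.Wout i j * (z j - z' j)| := by rw [hcoord]
      _ ≤ ∑ j, |Ψ.Wout i j * (z j - z' j)| := Finset.abs_sum_le_sum_abs _ _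
      _ ≤ ∑ j, |Ψ.Wout i j| * δ := by
          apply Finset.sum_le_sum
          intro j _
          rw [abs_mul]
          exact mul_le_mul_of_nonneg_left (hz j) (abs_nonneg _)
      _ = (∑ j, |Ψ.Wout i j|) * δ := (Finset.sum_mul _ _ _).symm
      _ ≤ (Real.sqrt Ψ.dout * frobNorm Ψ.Wout) * δ :=
          mul_le_mul_of_nonneg_right (row_abs_sum_le _ _) hδ0
  rw [Real.norm_eq_abs]
  calc |(Ψ.real x - Ψ.real x') i| ≤ (Real.sqrt Ψ.dout * frobNorm Ψ.Wout) * δ := hbound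
    _ = Real.sqrt ((d0 : ℝ) * (Ψ.dout : ℝ)) * frobNorm Ψ.Win * frobNorm Ψ.Wout * ‖x - x'‖ := by
        rw [hδ_def, Real.sqrt_mul (Nat.cast_nonneg d0)]
        ring
end

section
/- Let b>0 and N ∈ ℕ with N ≥ 2. Let G be the network graph with nodes v_1, …, v_N and edges exactly (v_i, v_{i+1}) for i=1,…,N−1. Let Φ be the positive SNN on G with all weights w_{(v_i,v_{i+1})} = 2b and all delays 0, and let Φ̃ be the positive SNN on G with all weights w̃_{(v_i,v_{i+1})} = b and all delays d̃_{(v_i,v_{i+1})} = b. Then for every input spike time t ∈ ℝ: R(Φ)(t) = t + (N−1)/(2b), R(Φ̃)(t) = t + (N−1)(1/b + b), and consequently |R(Φ)(t) − R(Φ̃)(t)| = (N−1) · (1/(2b²) + 1) · ‖Φ − Φ̃‖_{ℓ∞}. (This shows the Lipschitz constant L·(1+1/b²) in the parameter-Lipschitz bound for positive SNNs is almost tight.) -/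
open scoped BigOperators

section ChainAux

lemma relu_singleton (W a : ℝ) (hW : 0 < W) :
    {s : ℝ | W * relu (s - a) = 1} = {a + 1 / W} := by
  ext s
  simp only [Set.mem_setOf_eq, Set.mem_singleton_iff, relu]
  constructor
  · intro h
    have h1 : max (s - a) 0 = 1 / W := by
      rw [eq_div_iff hW.ne', mul_comm]; exact h
    rcases max_cases (s - a) 0 with ⟨hm, _⟩ | ⟨hm, _⟩ <;> rw [hm] at h1 <;>
      [linarith; (exact absurd h1.symm (ne_of_gt (one_div_pos.mpr hW)))]
  · intro h
    subst h
    have h2 : a + 1 / W - a = 1 / W := by ring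
    rw [h2, max_eq_left (le_of_lt (one_div_pos.mpr hW)), mul_one_div, div_self hW.ne']

lemma chain_pred_filter {N : ℕ} (G : NetworkGraph (Fin N))
    (hE : G.E = Finset.univ.filter (fun p : Fin N × Fin N => p.2.val = p.1.val + 1))
    (v : Fin N) (hv : 0 < v.val) :
    Finset.univ.filter (fun u => (u, v) ∈ G.E)
      = {(⟨v.val - 1, by have := v.isLt; omega⟩ : Fin N)} := by
  ext u
  simp only [Finset.mem_filter, Finset.mem_univ, true_and, Finset.mem_singleton, hE,
    Fin.ext_iff]
  omega

lemma chain_Vin {N : ℕ} (G : NetworkGraph (Fin N))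
    (hE : G.E = Finset.univ.filter (fun p : Fin N × Fin N => p.2.val = p.1.val + 1))
    (v : Fin N) : v ∈ G.Vin ↔ v.val = 0 := by
  simp only [NetworkGraph.Vin, Set.mem_setOf_eq]
  constructor
  · intro h
    by_contra h0
    exact h ⟨v.val - 1, by have := v.isLt; omega⟩
      (by simp only [hE, Finset.mem_filter, Finset.mem_univ, true_and]; omega)
  · intro h u hu
    simp only [hE, Finset.mem_filter, Finset.mem_univ, true_and] at hu
    omega

lemma chain_potSet {N : ℕ} (G : NetworkGraph (Fin N))
    (hE : G.E = Finset.univ.filter (fun p : Fin N × Fin N => p.2.val = p.1.val + 1))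
    (w d : Fin N × Fin N → ℝ) (W D : ℝ) (hW : 0 < W)
    (hw : ∀ e ∈ G.E, w e = W) (hd : ∀ e ∈ G.E, d e = D)
    (tm : Fin N → ℝ) (v : Fin N) (hv : 0 < v.val) :
    {s : ℝ | potential G w d tm v s = 1}
      = {tm (⟨v.val - 1, by have := v.isLt; omega⟩ : Fin N) + D + 1 / W} := by
  set u : Fin N := ⟨v.val - 1, by have := v.isLt; omega⟩ with hu
  have hmem : (u, v) ∈ G.E := by
    simp only [hE, Finset.mem_filter, Finset.mem_univ, true_and, hu]
    omega
  have hpot : ∀ s, potential G w d tm v s = W * relu (s - (tm u + D)) := by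
    intro s
    rw [potential, chain_pred_filter G hE v hv, Finset.sum_singleton,
      hw _ hmem, hd _ hmem, sub_sub]
  simp_rw [hpot]
  exact relu_singleton W (tm u + D) hW

lemma texp_step (t D W : ℝ) {N : ℕ} (v : Fin N) (hv : 0 < v.val) :
    (t + ((v.val - 1 : ℕ) : ℝ) * (D + 1 / W)) + D + 1 / W
      = t + (v.val : ℝ) * (D + 1 / W) := by
  rw [Nat.cast_sub hv]
  ring

lemma chain_spikeMap {N : ℕ} (G : NetworkGraph (Fin N))
    (hE : G.E = Finset.univ.filter (fun p : Fin N × Fin N => p.2.val = p.1.val + 1))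
    (w d : Fin N × Fin N → ℝ) (W D : ℝ) (hW : 0 < W)
    (hw : ∀ e ∈ G.E, w e = W) (hd : ∀ e ∈ G.E, d e = D)
    (tin : Fin N → ℝ) (t : ℝ) (htin : ∀ v : Fin N, v.val = 0 → tin v = t) :
    ∀ v : Fin N, spikeMap G w d tin v = t + (v.val : ℝ) * (D + 1 / W) := by
  set texp : Fin N → ℝ := fun v => t + (v.val : ℝ) * (D + 1 / W) with htexp
  have hIs : IsSpikeMap G w d tin texp := by
    constructor
    · intro v hv
      have h0 : v.val = 0 := (chain_Vin G hE v).mp hv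
      simp [texp, h0, htin v h0]
    · intro v hv
      have hvpos : 0 < v.val := by
        rcases Nat.eq_zero_or_pos v.val with h | h
        · exact absurd ((chain_Vin G hE v).mpr h) hv
        · exact h
      have hs : {s : ℝ | potential G w d texp v s = 1} = {texp v} := by
        rw [chain_potSet G hE w d W D hW hw hd texp v hvpos]
        congr 1
        exact texp_step t D W v hvpos
      rw [hs]
      exact isLeast_singleton
  have huniq : ∀ tm, IsSpikeMap G w d tin tm → ∀ v : Fin N, tm v = texp v := by
    intro tm hm
    suffices h : ∀ k, ∀ v : Fin N, v.val = k → tm v = texp v by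
      intro v; exact h v.val v rfl
    intro k
    induction k using Nat.strong_induction_on with
    | _ k ih =>
      intro v hv
      rcases Nat.eq_zero_or_pos k with h0 | hpos
      · have h00 : v.val = 0 := by omega
        have hin : v ∈ G.Vin := (chain_Vin G hE v).mpr h00
        rw [hm.1 v hin, htin v h00]
        simp [texp, h00]
      · have hvpos : 0 < v.val := by omega
        have hnin : v ∉ G.Vin := fun hi => by
          have := (chain_Vin G hE v).mp hi; omega
        have hle := hm.2 v hnin
        set u : Fin N := ⟨v.val - 1, by have := v.isLt; omega⟩ with hu
        have hpred : tm u = texp u := ih (v.val - 1) (by omega) u rfl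
        have hs : {s : ℝ | potential G w d tm v s = 1} = {texp v} := by
          rw [chain_potSet G hE w d W D hW hw hd tm v hvpos]
          rw [show tm (⟨v.val - 1, by have := v.isLt; omega⟩ : Fin N) = texp u from hpred]
          congr 1
          exact texp_step t D W v hvpos
        rw [hs] at hle
        exact hle.1
  intro v
  have hex : ∃ tm, IsSpikeMap G w d tin tm := ⟨texp, hIs⟩
  simp only [spikeMap, dif_pos hex]
  exact huniq _ hex.choose_spec v

end ChainAux

/-- Remark: near-tightness of the parameter-Lipschitz bound.
On the chain graph with `N` nodes, the positive SNN with weights `2b`, delays `0`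
realizes `t ↦ t + (N−1)/(2b)`, the one with weights `b`, delays `b` realizes
`t ↦ t + (N−1)(1/b + b)`, and the difference equals
`(N−1)·(1/(2b²) + 1)·‖Φ − Φ̃‖_∞`. -/
theorem statement3 (b : ℝ) (hb : 0 < b) (N : ℕ) (hN : 2 ≤ N)
    (G : NetworkGraph (Fin N))
    (hE : G.E = Finset.univ.filter (fun p : Fin N × Fin N => p.2.val = p.1.val + 1))
    (ein : Fin 1 → Fin N) (eout : Fin 1 → Fin N)
    (hein : ein 0 = ⟨0, by omega⟩) (heout : eout 0 = ⟨N - 1, by omega⟩)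
    (w d w' d' : Fin N × Fin N → ℝ)
    (hw : ∀ e ∈ G.E, w e = 2 * b) (hd : ∀ e ∈ G.E, d e = 0)
    (hw' : ∀ e ∈ G.E, w' e = b) (hd' : ∀ e ∈ G.E, d' e = b)
    (t : ℝ) :
    snnReal G w d ein eout (fun _ => t) 0 = t + ((N : ℝ) - 1) / (2 * b) ∧
    snnReal G w' d' ein eout (fun _ => t) 0 = t + ((N : ℝ) - 1) * (1 / b + b) ∧
    |snnReal G w d ein eout (fun _ => t) 0 - snnReal G w' d' ein eout (fun _ => t) 0|
      = ((N : ℝ) - 1) * (1 / (2 * b ^ 2) + 1) * paramDist G w d w' d' := by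
  have hb2 : (0:ℝ) < 2 * b := by linarith
  have hNR : (1:ℝ) ≤ (N : ℝ) := by exact_mod_cast (by omega : 1 ≤ N)
  have heinj : Function.Injective ein := fun a c _ => Subsingleton.elim a c
  have htin : ∀ v : Fin N, v.val = 0 →
      Function.extend ein (fun _ => t) (fun _ => 0) v = t := by
    intro v hv
    have : v = ein 0 := by
      rw [hein]; exact Fin.ext (by simpa using hv)
    rw [this, heinj.extend_apply]
  have hcast : (((N - 1 : ℕ)) : ℝ) = (N : ℝ) - 1 := by
    rw [Nat.cast_sub (by omega)]; simp
  have h1 : snnReal G w d ein eout (fun _ => t) 0 = t + ((N : ℝ) - 1) / (2 * b) := by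
    rw [snnReal, chain_spikeMap G hE w d (2 * b) 0 hb2 hw hd _ t htin (eout 0),
      heout]
    simp only [hcast]
    ring
  have h2 : snnReal G w' d' ein eout (fun _ => t) 0
      = t + ((N : ℝ) - 1) * (1 / b + b) := by
    rw [snnReal, chain_spikeMap G hE w' d' b b hb hw' hd' _ t htin (eout 0), heout]
    simp only [hcast]
    ring
  have hedge : ((⟨0, by omega⟩ : Fin N), (⟨1, by omega⟩ : Fin N)) ∈ G.E := by
    simp [hE]
  have hval : ∀ e ∈ G.E, max |w e - w' e| |d e - d' e| = b := by
    intro e he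
    rw [hw e he, hw' e he, hd e he, hd' e he,
      show 2 * b - b = b by ring, show (0:ℝ) - b = -b by ring, abs_neg,
      abs_of_pos hb, max_self]
  have himg : (fun e => max |w e - w' e| |d e - d' e|) '' (G.E : Set (Fin N × Fin N))
      = {b} := by
    ext r
    simp only [Set.mem_image, Set.mem_singleton_iff, Finset.mem_coe]
    constructor
    · rintro ⟨e, he, rfl⟩
      exact hval e he
    · rintro rfl
      exact ⟨_, hedge, hval _ hedge⟩
  have hpd : paramDist G w d w' d' = b := by
    rw [paramDist, himg, csSup_singleton]
  refine ⟨h1, h2, ?_⟩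
  rw [h1, h2, hpd, abs_sub_comm]
  have hBA : (t + ((N : ℝ) - 1) * (1 / b + b)) - (t + ((N : ℝ) - 1) / (2 * b))
      = ((N : ℝ) - 1) * (1 / (2 * b) + b) := by
    field_simp
    ring
  rw [hBA, abs_of_nonneg (by
    apply mul_nonneg (by linarith)
    have : (0:ℝ) < 1 / (2 * b) := one_div_pos.mpr hb2
    nlinarith)]
  field_simp
end

section
/- Let d_0 ∈ ℕ with d_0 ≥ 2, and let ε > 0. Then there exists an affine SNN Ψ^min_ε = (A_in, Φ^min_ε, A_out) with realization R(Ψ^min_ε): ℝ^{d_0} → ℝ such that for all x_1, …, x_{d_0} ∈ ℝ: |R(Ψ^min_ε)(x_1,…,x_{d_0}) − min{x_1,…,x_{d_0}}| ≤ ε. Moreover, Size(Ψ^min_ε) = 2·d_0 + 1, the network graph has depth 1, all weights in Ψ^min_ε are bounded above in absolute value by max{1, 1/ε}, and all synaptic weights of Φ^min_ε are bounded below by 1/ε. -/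
open scoped BigOperators

noncomputable section Stmt7Aux

namespace Stmt7

open Finset

variable {d0 : ℕ}

/-- Edge set: each input node `i.castSucc` feeds the output node `Fin.last d0`. -/
def E0 (d0 : ℕ) : Finset (Fin (d0+1) × Fin (d0+1)) :=
  Finset.univ.image (fun i : Fin d0 => (i.castSucc, Fin.last d0))

lemma mem_E0 {p : Fin (d0+1) × Fin (d0+1)} :
    p ∈ E0 d0 ↔ p.1 ≠ Fin.last d0 ∧ p.2 = Fin.last d0 := by
  constructor
  · intro hp
    simp only [E0, Finset.mem_image, Finset.mem_univ, true_and] at hp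
    obtain ⟨i, hi⟩ := hp
    rw [← hi]
    exact ⟨(Fin.castSucc_lt_last i).ne, rfl⟩
  · rintro ⟨h1, h2⟩
    obtain ⟨i, hi⟩ := Fin.exists_castSucc_eq.2 h1
    simp only [E0, Finset.mem_image, Finset.mem_univ, true_and]
    exact ⟨i, by rw [hi, ← h2]⟩

/-- The network graph of the min-network. -/
def G0 (d0 : ℕ) (h : 0 < d0) : NetworkGraph (Fin (d0+1)) where
  E := E0 d0
  acyclic := by
    constructor
    intro v
    refine Acc.intro v fun u hu => Acc.intro u fun u' hu' => ?_
    rw [mem_E0] at hu hu'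
    exact absurd hu'.2 hu.1
  noIsolated := by
    intro v
    by_cases hv : v = Fin.last d0
    · exact Or.inl ⟨(⟨0, h⟩ : Fin d0).castSucc,
        mem_E0.2 ⟨(Fin.castSucc_lt_last _).ne, hv⟩⟩
    · exact Or.inr ⟨Fin.last d0, mem_E0.2 ⟨hv, rfl⟩⟩

lemma Vin_G0 (h : 0 < d0) : (G0 d0 h).Vin = {v | v ≠ Fin.last d0} := by
  ext v
  simp only [NetworkGraph.Vin, Set.mem_setOf_eq]
  constructor
  · intro hv hvl
    exact hv ((⟨0, h⟩ : Fin d0).castSucc)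
      (mem_E0.2 ⟨(Fin.castSucc_lt_last _).ne, hvl⟩)
  · intro hv u hu
    exact hv (mem_E0.1 hu).2

lemma Vout_G0 (h : 0 < d0) : (G0 d0 h).Vout = {v | v = Fin.last d0} := by
  ext v
  simp only [NetworkGraph.Vout, Set.mem_setOf_eq]
  constructor
  · intro hv
    by_contra hvl
    exact hv (Fin.last d0) (mem_E0.2 ⟨hvl, rfl⟩)
  · intro hv u hu
    exact (mem_E0.1 hu).1 hv

/-- The affine SNN realizing (approximately) the minimum. -/
def Psi (d0 : ℕ) (h : 0 < d0) (ε : ℝ) (hε : 0 < ε) : AffSNN d0 1 where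
  n := d0 + 1
  din := d0
  dout := 1
  G := G0 d0 h
  w := fun _ => 1/ε
  dl := fun _ => 0
  ein := Fin.castSucc
  eout := fun _ => Fin.last d0
  Win := 1
  bin := 0
  Wout := fun _ _ => 1
  bout := 0
  w_pos := fun _ _ => by positivity
  dl_nonneg := fun _ _ => le_refl 0
  ein_inj := Fin.castSucc_injective d0
  ein_range := by
    rw [Vin_G0]
    ext v
    simp only [Set.mem_range, Set.mem_setOf_eq]
    exact Fin.exists_castSucc_eq
  eout_inj := fun a b _ => Subsingleton.elim a b
  eout_range := by
    rw [Vout_G0]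
    ext v
    simp only [Set.mem_range, Set.mem_setOf_eq]
    exact ⟨fun ⟨_, h⟩ => h.symm, fun h => ⟨0, h.symm⟩⟩

lemma filter_pred (h : 0 < d0) :
    Finset.univ.filter (fun u => (u, Fin.last d0) ∈ (G0 d0 h).E)
      = Finset.univ.image (Fin.castSucc (n := d0)) := by
  ext u
  simp only [Finset.mem_filter, Finset.mem_univ, true_and, Finset.mem_image]
  rw [show ((u, Fin.last d0) ∈ (G0 d0 h).E) ↔ _ from mem_E0]
  simp only [and_true]
  exact Fin.exists_castSucc_eq.symm

/-- The potential at the output node, computed explicitly. -/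
lemma potential_last (h : 0 < d0) (ε : ℝ) (x : Fin d0 → ℝ)
    (t : Fin (d0+1) → ℝ) (ht : ∀ i : Fin d0, t i.castSucc = x i) (s : ℝ) :
    potential (G0 d0 h) (fun _ => 1/ε) (fun _ => 0) t (Fin.last d0) s
      = ∑ i : Fin d0, (1/ε) * relu (s - x i) := by
  unfold potential
  rw [filter_pred h, Finset.sum_image (fun a _ b _ hab => Fin.castSucc_injective d0 hab)]
  refine Finset.sum_congr rfl fun i _ => ?_
  rw [ht i]
  ring_nf

lemma isLeast_S (h : 0 < d0) {ε : ℝ} (hε : 0 < ε) (x : Fin d0 → ℝ) :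
    ∃ t0, IsLeast {s : ℝ | ∑ i : Fin d0, (1/ε) * relu (s - x i) = 1} t0 ∧
      ∃ i0 : Fin d0, (∀ i, x i0 ≤ x i) ∧ x i0 < t0 ∧ t0 ≤ x i0 + ε := by
  obtain ⟨i0, -, hi0⟩ := Finset.exists_min_image Finset.univ x ⟨⟨0, h⟩, Finset.mem_univ _⟩
  have hi0' : ∀ i, x i0 ≤ x i := fun i => hi0 i (Finset.mem_univ i)
  set P : ℝ → ℝ := fun s => ∑ i : Fin d0, (1/ε) * relu (s - x i) with hP
  have hcont : Continuous P := by
    apply continuous_finset_sum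
    intro i _
    exact continuous_const.mul (((continuous_id.sub continuous_const).max continuous_const))
  have hzero : ∀ s ≤ x i0, P s = 0 := by
    intro s hs
    apply Finset.sum_eq_zero
    intro i _
    have : relu (s - x i) = 0 := max_eq_right (by have := hi0' i; linarith)
    rw [this, mul_zero]
  have hone : (1:ℝ) ≤ P (x i0 + ε) := by
    have hterm : (1/ε) * relu (x i0 + ε - x i0) = 1 := by
      have : relu (x i0 + ε - x i0) = ε := by
        rw [show x i0 + ε - x i0 = ε by ring]
        exact max_eq_left hε.le
      rw [this]
      field_simp
    calc (1:ℝ) = (1/ε) * relu (x i0 + ε - x i0) := hterm.symm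
      _ ≤ P (x i0 + ε) := Finset.single_le_sum
          (f := fun i => (1/ε) * relu (x i0 + ε - x i))
          (fun i _ => mul_nonneg (by positivity) (le_max_right _ _))
          (Finset.mem_univ i0)
  obtain ⟨s0, hs0mem, hPs0⟩ :=
    intermediate_value_Icc (by linarith : x i0 ≤ x i0 + ε) hcont.continuousOn
      (Set.mem_Icc.2 ⟨by rw [hzero _ le_rfl]; exact zero_le_one, hone⟩)
  have hne : {s : ℝ | P s = 1}.Nonempty := ⟨s0, hPs0⟩
  have hbdd : BddBelow {s : ℝ | P s = 1} := by
    refine ⟨x i0, fun s hs => ?_⟩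
    by_contra hlt
    push_neg at hlt
    rw [Set.mem_setOf_eq, hzero s hlt.le] at hs
    norm_num at hs
  have hcl : IsClosed {s : ℝ | P s = 1} := isClosed_eq hcont continuous_const
  have hmem : sInf {s : ℝ | P s = 1} ∈ {s : ℝ | P s = 1} := hcl.csInf_mem hne hbdd
  refine ⟨sInf {s : ℝ | P s = 1}, ⟨hmem, fun s hs => csInf_le hbdd hs⟩, i0, hi0', ?_, ?_⟩
  · by_contra hle
    push_neg at hle
    have := hzero _ hle
    rw [Set.mem_setOf_eq, this] at hmem
    norm_num at hmem
  · exact le_trans (csInf_le hbdd hPs0) hs0mem.2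

lemma real_eq (h : 0 < d0) {ε : ℝ} (hε : 0 < ε) (x : Fin d0 → ℝ) (t0 : ℝ)
    (ht0 : IsLeast {s : ℝ | ∑ i : Fin d0, (1/ε) * relu (s - x i) = 1} t0) :
    (Psi d0 h ε hε).real x 0 = t0 := by
  set tin := Function.extend (Fin.castSucc (n := d0)) x (fun _ => 0) with htin
  have htin_app : ∀ i : Fin d0, tin i.castSucc = x i :=
    fun i => (Fin.castSucc_injective d0).extend_apply x _ i
  set t : Fin (d0+1) → ℝ := fun v => if v = Fin.last d0 then t0 else tin v with htdef
  have ht_in : ∀ i : Fin d0, t i.castSucc = x i := by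
    intro i
    rw [htdef]
    simp only [if_neg (Fin.castSucc_lt_last i).ne]
    exact htin_app i
  have hsm : IsSpikeMap (G0 d0 h) (fun _ => 1/ε) (fun _ => 0) tin t := by
    constructor
    · intro v hv
      rw [Vin_G0] at hv
      simp only [htdef, if_neg hv]
    · intro v hv
      rw [Vin_G0] at hv
      have hvl : v = Fin.last d0 := by simpa using hv
      subst hvl
      have hset : {s : ℝ | potential (G0 d0 h) (fun _ => 1/ε) (fun _ => 0) t
            (Fin.last d0) s = 1} = {s : ℝ | ∑ i : Fin d0, (1/ε) * relu (s - x i) = 1} := by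
        ext s
        rw [Set.mem_setOf_eq, Set.mem_setOf_eq, potential_last h ε x t ht_in]
      rw [hset, show t (Fin.last d0) = t0 from if_pos rfl]
      exact ht0
  have hex : ∃ t', IsSpikeMap (G0 d0 h) (fun _ => 1/ε) (fun _ => 0) tin t' := ⟨t, hsm⟩
  have hspike : spikeMap (G0 d0 h) (fun _ => 1/ε) (fun _ => 0) tin (Fin.last d0) = t0 := by
    rw [spikeMap, dif_pos hex]
    obtain ⟨h1, h2⟩ := hex.choose_spec
    have hin : ∀ i : Fin d0, hex.choose i.castSucc = x i := by
      intro i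
      rw [h1 _ (by rw [Vin_G0]; exact (Fin.castSucc_lt_last i).ne)]
      exact htin_app i
    have hlast := h2 (Fin.last d0) (by rw [Vin_G0]; simp)
    have hset : {s : ℝ | potential (G0 d0 h) (fun _ => 1/ε) (fun _ => 0) hex.choose
          (Fin.last d0) s = 1} = {s : ℝ | ∑ i : Fin d0, (1/ε) * relu (s - x i) = 1} := by
      ext s
      rw [Set.mem_setOf_eq, Set.mem_setOf_eq, potential_last h ε x hex.choose hin]
    rw [hset] at hlast
    exact hlast.unique ht0
  have hmv : (1 : Matrix (Fin d0) (Fin d0) ℝ).mulVec x + 0 = x := by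
    rw [Matrix.one_mulVec, add_zero]
  rw [AffSNN.real]
  simp only [Psi, affineReal, snnReal, Matrix.one_mulVec, add_zero, Pi.add_apply,
    Pi.zero_apply, Matrix.mulVec, dotProduct, Fin.sum_univ_one, one_mul]
  erw [Fin.sum_univ_one, add_zero]
  exact hspike

lemma size_Psi (h : 0 < d0) {ε : ℝ} (hε : 0 < ε) : (Psi d0 h ε hε).size = 2 * d0 + 1 := by
  have hinj : Function.Injective (fun i : Fin d0 => ((i.castSucc, Fin.last d0) :
      Fin (d0+1) × Fin (d0+1))) :=
    fun a b hab => Fin.castSucc_injective d0 (congrArg Prod.fst hab)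
  have hcard : (E0 d0).card = d0 := by
    rw [E0, Finset.card_image_of_injective _ hinj, Finset.card_univ, Fintype.card_fin]
  rw [AffSNN.size]
  simp only [Psi]
  have hw : {e : Fin (d0+1) × Fin (d0+1) | e ∈ (G0 d0 h).E ∧ (1:ℝ)/ε ≠ 0} = ↑(E0 d0) := by
    ext e
    simp only [Set.mem_setOf_eq, Finset.mem_coe, and_iff_left (one_div_ne_zero hε.ne')]
    exact Iff.rfl
  have hdl : {e : Fin (d0+1) × Fin (d0+1) | e ∈ (G0 d0 h).E ∧ (0:ℝ) ≠ 0} = ∅ := by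
    ext e; simp
  have hWin : {p : Fin d0 × Fin d0 | (1 : Matrix (Fin d0) (Fin d0) ℝ) p.1 p.2 ≠ 0}
      = ↑(Finset.univ.image (fun i : Fin d0 => (i, i))) := by
    ext p
    simp only [Set.mem_setOf_eq, Finset.coe_image, Finset.coe_univ, Set.image_univ,
      Set.mem_range]
    constructor
    · intro hp
      by_cases hpe : p.1 = p.2
      · exact ⟨p.1, Prod.ext rfl hpe⟩
      · exact absurd (Matrix.one_apply_ne hpe) hp
    · rintro ⟨i, rfl⟩
      rw [Matrix.one_apply_eq]
      exact one_ne_zero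
  have hWout : {p : Fin 1 × Fin 1 | (1:ℝ) ≠ 0} = Set.univ := by
    ext p; simp
  have hb : {i : Fin d0 | (0 : Fin d0 → ℝ) i ≠ 0} = ∅ := by
    ext i; simp
  have hb2 : {i : Fin 1 | (0 : Fin 1 → ℝ) i ≠ 0} = ∅ := by
    ext i; simp
  erw [hw, hdl, hWin, hWout, hb, hb2]
  rw [Set.ncard_coe_finset, Set.ncard_coe_finset, Set.ncard_empty, Set.ncard_empty,
    Set.ncard_empty, Set.ncard_univ, hcard,
    Finset.card_image_of_injective _ (fun a b hab => congrArg Prod.fst hab),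
    Finset.card_univ, Fintype.card_fin]
  simp only [Nat.card_eq_fintype_card, Fintype.card_prod, Fintype.card_fin]
  omega

lemma depth_Psi (h : 0 < d0) : (G0 d0 h).DepthEq 1 := by
  constructor
  · refine ⟨![(⟨0, h⟩ : Fin d0).castSucc, Fin.last d0], ?_⟩
    intro i
    fin_cases i
    exact mem_E0.2 ⟨(Fin.castSucc_lt_last _).ne, rfl⟩
  · intro n hn
    by_contra hn1
    push_neg at hn1
    obtain ⟨p, hp⟩ := hn
    have h2 : 2 ≤ n := hn1
    have h0 := mem_E0.1 (hp ⟨0, by omega⟩)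
    have h1 := mem_E0.1 (hp ⟨1, by omega⟩)
    have heq : (⟨0, by omega⟩ : Fin n).succ = (⟨1, by omega⟩ : Fin n).castSucc := by
      apply Fin.ext
      simp
    rw [heq] at h0
    exact h1.1 h0.2

end Stmt7

end Stmt7Aux

/-- Lemma: approximation of the minimum. For `d0 ≥ 2` and `ε > 0`
there is an affine SNN whose realization is within `ε` of
`(x_1, …, x_{d0}) ↦ min{x_1, …, x_{d0}}` everywhere, of size exactly `2·d0 + 1`, whose
network graph has depth `1`, all of whose weights are bounded in absolute value by
`max{1, 1/ε}`, and all of whose synaptic weights are at least `1/ε`. -/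
theorem statement7 (d0 : ℕ) (hd0 : 2 ≤ d0) (ε : ℝ) (hε : 0 < ε) :
    ∃ Ψ : AffSNN d0 1,
      (∀ x : Fin d0 → ℝ, |Ψ.real x 0 - sInf (Set.range x)| ≤ ε) ∧
      Ψ.size = 2 * d0 + 1 ∧
      Ψ.G.DepthEq 1 ∧
      Ψ.weightsBddAbove (max 1 (1 / ε)) ∧
      Ψ.synBddBelow (1 / ε) := by
  have h : 0 < d0 := by omega
  have hC1 : (1:ℝ) ≤ max 1 (1/ε) := le_max_left _ _
  have hC0 : (0:ℝ) ≤ max 1 (1/ε) := le_trans zero_le_one hC1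
  refine ⟨Stmt7.Psi d0 h ε hε, ?_, Stmt7.size_Psi h hε, Stmt7.depth_Psi h, ?_, ?_⟩
  · intro x
    obtain ⟨t0, hleast, i0, hmin, hlt, hle⟩ := Stmt7.isLeast_S h hε x
    rw [Stmt7.real_eq h hε x t0 hleast]
    have hinf : sInf (Set.range x) = x i0 :=
      IsLeast.csInf_eq ⟨⟨i0, rfl⟩, by rintro y ⟨i, rfl⟩; exact hmin i⟩
    rw [hinf, abs_le]
    constructor <;> linarith
  · refine ⟨?_, ?_, ?_, ?_, ?_, ?_⟩ <;> simp only [AffSNN.weightsBddAbove, Stmt7.Psi]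
    · intro e _
      rw [abs_of_pos (by positivity)]
      exact le_max_right _ _
    · intro e _
      rw [abs_zero]
      exact hC0
    · intro i j
      rcases eq_or_ne i j with rfl | hij
      · rw [Matrix.one_apply_eq, abs_one]; exact hC1
      · rw [Matrix.one_apply_ne hij, abs_zero]; exact hC0
    · intro i
      rw [Pi.zero_apply, abs_zero]
      exact hC0
    · intro i j
      rw [abs_one]; exact hC1
    · intro i
      rw [Pi.zero_apply, abs_zero]
      exact hC0
  · intro e _
    simp only [Stmt7.Psi]
    exact le_refl _
end
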